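/- Let G = (V, E) be a graph with |V| ≥ 3 and let G' be any graph obtained from G by repeatedly adding an edge between two distinct non-adjacent vertices u, v satisfying deg(u) + deg(v) ≥ |V| in the current graph (finitely many such additions, in any order). Then G has a Hamiltonian path if and only if G' has a Hamiltonian path. -/

import Mathlib

/-- A graph has a Hamiltonian path if it has a walk visiting every vertex exactly once. -/
def HasHamiltonianPath {V : Type} [DecidableEq V] (G : SimpleGraph V) : Prop :=
  ∃ (a b : V) (p : G.Walk a b), p.IsHamiltonian

/-- One step of the Bondy–Chvátal closure operation (for Hamiltonian paths): `H'` is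
obtained from `H` by adding an edge between two distinct non-adjacent vertices `u, v`
whose degree sum in the current graph `H` is at least the number of vertices. -/
def BondyChvatalStep {V : Type} [Fintype V] (H H' : SimpleGraph V) : Prop :=
  ∃ u v : V, u ≠ v ∧ ¬ H.Adj u v ∧
    Fintype.card V ≤ (H.neighborSet u).ncard + (H.neighborSet v).ncard ∧
    H' = H ⊔ SimpleGraph.fromEdgeSet {s(u, v)}

section Aux

open List

set_option linter.unusedSectionVars false
set_option maxHeartbeats 1000000
variable {V : Type} [DecidableEq V]

def HamList (G : SimpleGraph V) (l : List V) : Prop :=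
  l.Chain' G.Adj ∧ l.Nodup ∧ ∀ x, x ∈ l

lemma chain'_rev (H : SimpleGraph V) {l : List V} (h : l.Chain' H.Adj) :
    l.reverse.Chain' H.Adj := by
  rw [List.Chain', List.isChain_reverse]
  exact h.imp fun a b hab => hab.symm

lemma core [Fintype V] (H : SimpleGraph V) (u v : V) (hna : ¬ H.Adj u v)
    (hdeg : Fintype.card V ≤ (H.neighborSet u).ncard + (H.neighborSet v).ncard)
    (P R : List V)
    (hP : (P ++ [u]).Chain' H.Adj) (hR : (v :: R).Chain' H.Adj)
    (hnd : (P ++ u :: v :: R).Nodup) (hm : ∀ x, x ∈ P ++ u :: v :: R) :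
    ∃ l', HamList H l' := by
  classical
  by_contra hno
  push_neg at hno
  set P' : List V := P ++ [u] with hP'def
  set Q : List V := v :: R with hQdef
  set l : List V := P' ++ Q with hldef
  have hleq : l = P ++ u :: v :: R := by simp [hldef, hP'def, hQdef]
  have hndl : l.Nodup := hleq ▸ hnd
  have hml : ∀ x, x ∈ l := fun x => hleq ▸ hm x
  set n : ℕ := l.length with hndef
  set k : ℕ := P.length with hkdef
  have hP'len : P'.length = k + 1 := by simp [hP'def, hkdef]
  have hQpos : 0 < Q.length := by simp [hQdef]
  have hnk : n = k + 1 + Q.length := by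
    rw [hndef, hldef, List.length_append, hP'len]
  have hncard : n = Fintype.card V := by
    rw [hndef, ← List.toFinset_card_of_nodup hndl]
    congr 1
    exact Finset.eq_univ_iff_forall.mpr fun x => List.mem_toFinset.mpr (hml x)
  -- the indexing function
  set d : ℕ → V := fun m => l.getD m u with hddef
  have hdget : ∀ m (h : m < n), d m = l[m] := fun m h => List.getD_eq_getElem l u h
  have hdinj : ∀ m₁ m₂, m₁ < n → m₂ < n → d m₁ = d m₂ → m₁ = m₂ := by
    intro m₁ m₂ h₁ h₂ he
    rw [hdget m₁ h₁, hdget m₂ h₂] at he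
    exact (hndl.getElem_inj_iff).mp he
  have hdsurj : ∀ x : V, ∃ m, m < n ∧ d m = x := by
    intro x
    obtain ⟨m, hm', he⟩ := List.mem_iff_getElem.mp (hml x)
    exact ⟨m, hm', by rw [hdget m hm']; exact he⟩
  -- values of d on the pieces
  have hdP : ∀ m (h : m < k + 1), d m = P'[m]'(by omega) := by
    intro m h
    rw [hdget m (by omega)]
    exact List.getElem_append_left (by omega)
  have hdQ : ∀ m (h : k + 1 ≤ m) (h2 : m < n), d m = Q[m - (k+1)]'(by omega) := by
    intro m h h2
    rw [hdget m h2]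
    have := List.getElem_append_right (as := P') (bs := Q) (i := m)
      (h₁ := by omega) (h₂ := by rw [← hldef]; omega)
    rw [this]
    congr 1
    omega
  have hdk1 : d (k + 1) = v := by
    rw [hdQ (k+1) le_rfl (by omega)]
    simp [hQdef]
  -- helper to build hamlists and get contradictions
  have build : ∀ l' : List V, l' ~ l → l'.Chain' H.Adj → False := by
    intro l' hperm hch
    exact hno l' ⟨hch, hperm.nodup_iff.mpr hndl, fun x => hperm.mem_iff.mpr (hml x)⟩
  -- the finsets
  set A : Finset ℕ := (Finset.range n).filter (fun m => H.Adj u (d m)) with hAdef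
  set B : Finset ℕ := (Finset.range n).filter (fun m => H.Adj v (d m)) with hBdef
  have hcardA : A.card = (H.neighborSet u).ncard := by
    have himg : H.neighborSet u = d '' ↑A := by
      ext x
      simp only [SimpleGraph.mem_neighborSet, Set.mem_image, Finset.mem_coe, hAdef,
        Finset.mem_filter, Finset.mem_range]
      constructor
      · intro hx
        obtain ⟨m, hm', he⟩ := hdsurj x
        exact ⟨m, ⟨hm', he ▸ hx⟩, he⟩
      · rintro ⟨m, ⟨_, ha⟩, rfl⟩
        exact ha
    rw [himg, Set.ncard_image_of_injOn, Set.ncard_coe_finset]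
    intro m₁ h₁ m₂ h₂ he
    simp only [Finset.mem_coe, hAdef, Finset.mem_filter, Finset.mem_range] at h₁ h₂
    exact hdinj m₁ m₂ h₁.1 h₂.1 he
  have hcardB : B.card = (H.neighborSet v).ncard := by
    have himg : H.neighborSet v = d '' ↑B := by
      ext x
      simp only [SimpleGraph.mem_neighborSet, Set.mem_image, Finset.mem_coe, hBdef,
        Finset.mem_filter, Finset.mem_range]
      constructor
      · intro hx
        obtain ⟨m, hm', he⟩ := hdsurj x
        exact ⟨m, ⟨hm', he ▸ hx⟩, he⟩
      · rintro ⟨m, ⟨_, ha⟩, rfl⟩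
        exact ha
    rw [himg, Set.ncard_image_of_injOn, Set.ncard_coe_finset]
    intro m₁ h₁ m₂ h₂ he
    simp only [Finset.mem_coe, hBdef, Finset.mem_filter, Finset.mem_range] at h₁ h₂
    exact hdinj m₁ m₂ h₁.1 h₂.1 he
  -- F1 : v is not adjacent to the first vertex
  have hF1 : ¬ H.Adj v (d 0) := by
    intro hadj
    refine build (Q.reverse ++ P') ?_ ?_
    · exact ((Q.reverse_perm).append (List.Perm.refl P')).trans List.perm_append_comm
    · rw [List.Chain', List.isChain_append]
      refine ⟨chain'_rev H hR, hP, ?_⟩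
      have h1 : Q.reverse.getLast? = some v := by
        rw [List.getLast?_reverse, hQdef, List.head?_cons]
      have h2 : P'.head? = some (d 0) := by
        rw [List.head?_eq_getElem?, List.getElem?_eq_getElem (by omega), hdP 0 (by omega)]
      rw [h1, h2]
      simpa using hadj
  -- F2 : u is not adjacent to the last vertex
  have hF2 : ¬ H.Adj u (d (n - 1)) := by
    intro hadj
    have hdl : d (n - 1) = Q[Q.length - 1]'(by omega) := by
      rw [hdQ (n-1) (by omega) (by omega)]
      simp only [show n - 1 - (k + 1) = Q.length - 1 by omega]
    refine build (P' ++ Q.reverse) ?_ ?_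
    · exact (List.Perm.refl P').append Q.reverse_perm
    · rw [List.Chain', List.isChain_append]
      refine ⟨hP, chain'_rev H hR, ?_⟩
      have h1 : P'.getLast? = some u := by rw [hP'def]; exact List.getLast?_concat
      have h2 : Q.reverse.head? = some (d (n-1)) := by
        rw [List.head?_reverse, List.getLast?_eq_getElem?,
          List.getElem?_eq_getElem (by omega), hdl]
      rw [h1, h2]
      simpa using hadj
  -- F3, middle-left case : 1 ≤ m ≤ k
  have hF3L : ∀ m, 1 ≤ m → m ≤ k → H.Adj v (d m) → ¬ H.Adj u (d (m - 1)) := by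
    intro m h1 h2 hB hadj
    have hmlt : m < P'.length := by omega
    have htlen : (P'.take m).length = m := by
      rw [List.length_take]; omega
    refine build (Q.reverse ++ (P'.drop m ++ (P'.take m).reverse)) ?_ ?_
    · calc Q.reverse ++ (P'.drop m ++ (P'.take m).reverse)
          ~ Q ++ (P'.drop m ++ P'.take m) :=
            (Q.reverse_perm).append ((List.Perm.refl _).append (List.reverse_perm _))
        _ ~ Q ++ (P'.take m ++ P'.drop m) :=
            (List.Perm.refl Q).append List.perm_append_comm
        _ = Q ++ P' := by rw [List.take_append_drop]
        _ ~ P' ++ Q := List.perm_append_comm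
    · rw [List.Chain', List.isChain_append]
      refine ⟨chain'_rev H hR, ?_, ?_⟩
      · rw [List.isChain_append]
        refine ⟨hP.infix (List.drop_suffix m P').isInfix,
          chain'_rev H (hP.infix (List.take_prefix m P').isInfix), ?_⟩
        have h1' : (P'.drop m).getLast? = some u := by
          rw [List.getLast?_drop, if_neg (by omega), hP'def]
          exact List.getLast?_concat
        have h2' : (P'.take m).reverse.head? = some (d (m-1)) := by
          rw [List.head?_reverse, List.getLast?_eq_getElem?, htlen,
            List.getElem?_take, if_pos (by omega),
            List.getElem?_eq_getElem (by omega), hdP (m-1) (by omega)]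
        rw [h1', h2']
        simpa using hadj
      · have h1' : Q.reverse.getLast? = some v := by
          rw [List.getLast?_reverse, hQdef, List.head?_cons]
        have h2' : (P'.drop m ++ (P'.take m).reverse).head? = some (d m) := by
          rw [List.head?_append_of_ne_nil _
            (by intro hc; have := congrArg List.length hc; simp at this; omega),
            List.head?_drop, List.getElem?_eq_getElem hmlt, hdP m (by omega)]
        rw [h1', h2']
        simpa using hB
  -- F3, right case : k + 2 ≤ m < n
  have hF3R : ∀ m, k + 2 ≤ m → m < n → H.Adj v (d m) → ¬ H.Adj u (d (m - 1)) := by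
    intro m h1 h2 hB hadj
    set t : ℕ := m - (k + 1) with htdef
    have ht1 : 1 ≤ t := by omega
    have htQ : t < Q.length := by omega
    have htlen : (Q.take t).length = t := by rw [List.length_take]; omega
    refine build (P' ++ ((Q.take t).reverse ++ Q.drop t)) ?_ ?_
    · calc P' ++ ((Q.take t).reverse ++ Q.drop t)
          ~ P' ++ (Q.take t ++ Q.drop t) :=
            (List.Perm.refl P').append ((List.reverse_perm _).append (List.Perm.refl _))
        _ = P' ++ Q := by rw [List.take_append_drop]
    · rw [List.Chain', List.isChain_append]
      refine ⟨hP, ?_, ?_⟩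
      · rw [List.isChain_append]
        refine ⟨chain'_rev H (hR.infix (List.take_prefix t Q).isInfix),
          hR.infix (List.drop_suffix t Q).isInfix, ?_⟩
        have h1' : (Q.take t).reverse.getLast? = some v := by
          rw [List.getLast?_reverse, List.head?_eq_getElem?, List.getElem?_take,
            if_pos (by omega), hQdef, List.getElem?_cons_zero]
        have h2' : (Q.drop t).head? = some (d m) := by
          rw [List.head?_drop, List.getElem?_eq_getElem htQ,
            hdQ m (by omega) h2]
        rw [h1', h2']
        simpa using hB
      · have h1' : P'.getLast? = some u := by rw [hP'def]; exact List.getLast?_concat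
        have h2' : ((Q.take t).reverse ++ Q.drop t).head? = some (d (m-1)) := by
          rw [List.head?_append_of_ne_nil _
            (by intro hc; have := congrArg List.length hc; simp at this; omega),
            List.head?_reverse, List.getLast?_eq_getElem?, htlen,
            List.getElem?_take, if_pos (by omega),
            List.getElem?_eq_getElem (by omega), hdQ (m-1) (by omega) (by omega)]
          simp only [show m - 1 - (k+1) = t - 1 by omega]
        rw [h1', h2']
        simpa using hadj
  -- the combined fact about B
  have hBfact : ∀ m ∈ B, 1 ≤ m ∧ (m - 1) ∉ A := by
    intro m hmB
    rw [hBdef, Finset.mem_filter, Finset.mem_range] at hmB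
    obtain ⟨hmn, hadjv⟩ := hmB
    have hm1 : 1 ≤ m := by
      rcases Nat.eq_zero_or_pos m with h | h
      · exact absurd (h ▸ hadjv) hF1
      · exact h
    refine ⟨hm1, ?_⟩
    intro hmA
    rw [hAdef, Finset.mem_filter, Finset.mem_range] at hmA
    obtain ⟨_, hadju⟩ := hmA
    rcases lt_trichotomy m (k + 1) with h | h | h
    · exact hF3L m hm1 (by omega) hadjv hadju
    · exact H.irrefl (h ▸ hdk1 ▸ hadjv)
    · exact hF3R m (by omega) hmn hadjv hadju
  -- counting
  set B' : Finset ℕ := B.image (fun m => m - 1) with hB'def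
  have hcardB' : B'.card = B.card := by
    apply Finset.card_image_of_injOn
    intro m₁ h₁ m₂ h₂ he
    have he' : m₁ - 1 = m₂ - 1 := he
    have := (hBfact m₁ h₁).1
    have := (hBfact m₂ h₂).1
    omega
  have hsub : A ∪ B' ⊆ Finset.range (n - 1) := by
    intro x hx
    rw [Finset.mem_union] at hx
    rw [Finset.mem_range]
    rcases hx with hx | hx
    · have hx' := hx
      rw [hAdef, Finset.mem_filter, Finset.mem_range] at hx'
      have : x ≠ n - 1 := by
        intro h
        exact hF2 (h ▸ hx'.2)
      omega
    · rw [hB'def, Finset.mem_image] at hx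
      obtain ⟨m, hmB, rfl⟩ := hx
      have h1 := (hBfact m hmB).1
      rw [hBdef, Finset.mem_filter, Finset.mem_range] at hmB
      omega
  have hdisj : Disjoint A B' := by
    rw [Finset.disjoint_left]
    intro x hxA hxB'
    rw [hB'def, Finset.mem_image] at hxB'
    obtain ⟨m, hmB, rfl⟩ := hxB'
    exact (hBfact m hmB).2 hxA
  have hfin : A.card + B.card ≤ n - 1 := by
    rw [← hcardB', ← Finset.card_union_of_disjoint hdisj]
    calc (A ∪ B').card ≤ (Finset.range (n-1)).card := Finset.card_le_card hsub
      _ = n - 1 := Finset.card_range _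
  rw [hcardA, hcardB] at hfin
  omega

lemma chain'_strengthen {R S : V → V → Prop} :
    ∀ {l : List V}, l.Chain' R → (∀ a ∈ l, ∀ b ∈ l, R a b → S a b) → l.Chain' S := by
  intro l
  induction l with
  | nil => intro _ _; exact List.isChain_nil
  | cons a l ih =>
    cases l with
    | nil => intro _ _; exact List.isChain_singleton a
    | cons b l =>
      intro h hs
      rw [List.Chain', List.isChain_cons_cons] at h ⊢
      exact ⟨hs a (by simp) b (by simp) h.1,
        ih h.2 fun x hx y hy => hs x (by simp [hx]) y (by simp [hy])⟩

lemma find_bad_pair {R S : V → V → Prop} :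
    ∀ {l : List V}, l.Chain' (fun a b => R a b ∨ S a b) → ¬ l.Chain' R →
      ∃ l₁ a b l₂, l = l₁ ++ a :: b :: l₂ ∧ S a b := by
  intro l
  induction l with
  | nil => intro _ h; exact absurd List.isChain_nil h
  | cons a l ih =>
    cases l with
    | nil => intro _ h; exact absurd (List.isChain_singleton a) h
    | cons b l =>
      intro h hn
      rw [List.Chain', List.isChain_cons_cons] at h hn
      push_neg at hn
      by_cases hr : R a b
      · obtain ⟨l₁, x, y, l₂, he, hs⟩ := ih h.2 (hn hr)
        exact ⟨a :: l₁, x, y, l₂, by rw [List.cons_append, he], hs⟩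
      · rcases h.1 with h1 | h1
        · exact absurd h1 hr
        · exact ⟨[], a, b, l, rfl, h1⟩

lemma upgrade (H : SimpleGraph V) (u v : V) (L : List V) (huv : u ∉ L ∨ v ∉ L)
    (hc : L.Chain' (H ⊔ SimpleGraph.fromEdgeSet {s(u,v)}).Adj) : L.Chain' H.Adj := by
  refine chain'_strengthen hc fun a ha b hb hab => ?_
  rw [SimpleGraph.sup_adj] at hab
  rcases hab with h | h
  · exact h
  · rw [SimpleGraph.fromEdgeSet_adj] at h
    exfalso
    rcases Sym2.eq_iff.mp (by simpa using h.1) with ⟨rfl, rfl⟩ | ⟨rfl, rfl⟩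
    · rcases huv with hu | hv
      · exact hu ha
      · exact hv hb
    · rcases huv with hu | hv
      · exact hu hb
      · exact hv ha

lemma key [Fintype V] (H : SimpleGraph V) (u v : V) (hna : ¬ H.Adj u v)
    (hdeg : Fintype.card V ≤ (H.neighborSet u).ncard + (H.neighborSet v).ncard)
    (l : List V) (hl : HamList (H ⊔ SimpleGraph.fromEdgeSet {s(u,v)}) l) :
    ∃ l', HamList H l' := by
  obtain ⟨hc, hnd, hm⟩ := hl
  by_cases hch : l.Chain' H.Adj
  · exact ⟨l, hch, hnd, hm⟩
  have hc' : l.Chain' (fun a b => H.Adj a b ∨ ((a = u ∧ b = v) ∨ (a = v ∧ b = u))) := by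
    refine hc.imp fun a b hab => ?_
    rw [SimpleGraph.sup_adj] at hab
    rcases hab with h | h
    · exact Or.inl h
    · rw [SimpleGraph.fromEdgeSet_adj] at h
      exact Or.inr (Sym2.eq_iff.mp (by simpa using h.1))
  obtain ⟨l₁, a, b, l₂, heq, hs⟩ := find_bad_pair hc' hch
  have hsplit : l = (l₁ ++ [a]) ++ (b :: l₂) := by rw [heq]; simp
  have hnd2 : (l₁ ++ [a]).Nodup ∧ (b :: l₂).Nodup ∧ (l₁ ++ [a]).Disjoint (b :: l₂) := by
    rw [← List.nodup_append']
    exact hsplit ▸ hnd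
  have hcpre : (l₁ ++ [a]).Chain' (H ⊔ SimpleGraph.fromEdgeSet {s(u,v)}).Adj :=
    hc.infix ⟨[], b :: l₂, by rw [hsplit]; simp⟩
  have hcsuf : (b :: l₂).Chain' (H ⊔ SimpleGraph.fromEdgeSet {s(u,v)}).Adj :=
    hc.infix ⟨l₁ ++ [a], [], by rw [hsplit]; simp⟩
  have hbnotin : b ∉ l₁ ++ [a] := fun hb => hnd2.2.2 hb (by simp)
  have hanotin : a ∉ b :: l₂ := fun ha => hnd2.2.2 (by simp) ha
  rcases hs with ⟨rfl, rfl⟩ | ⟨rfl, rfl⟩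
  · exact core H a b hna hdeg l₁ l₂ (upgrade H a b _ (Or.inr hbnotin) hcpre)
      (upgrade H a b _ (Or.inl hanotin) hcsuf) (heq ▸ hnd) (fun x => heq ▸ hm x)
  · exact core H a b (fun h => hna h.symm) (by omega) l₁ l₂
      (upgrade H b a _ (Or.inl hbnotin) hcpre)
      (upgrade H b a _ (Or.inr hanotin) hcsuf) (heq ▸ hnd) (fun x => heq ▸ hm x)


lemma chain'_to_walk {V : Type} (G : SimpleGraph V) :
    ∀ (l : List V) (a : V), (a :: l).Chain' G.Adj →
      ∃ (b : V) (p : G.Walk a b), p.support = a :: l := by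
  intro l
  induction l with
  | nil => exact fun a _ => ⟨a, SimpleGraph.Walk.nil, rfl⟩
  | cons c l ih =>
    intro a h
    rw [List.Chain', List.isChain_cons_cons] at h
    obtain ⟨b, p, hp⟩ := ih c h.2
    exact ⟨b, SimpleGraph.Walk.cons h.1 p, by simp [hp]⟩

lemma hasHamPath_iff {V : Type} [DecidableEq V] (G : SimpleGraph V) [Nonempty V] :
    HasHamiltonianPath G ↔ ∃ l, HamList G l := by
  constructor
  · rintro ⟨a, b, p, hp⟩
    refine ⟨p.support, p.isChain_adj_support, ?_, ?_⟩
    · rw [List.nodup_iff_count_le_one]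
      exact fun x => (hp x).le
    · intro x
      have := hp x
      exact List.count_pos_iff.mp (by omega)
  · rintro ⟨l, hc, hnd, hm⟩
    obtain ⟨a, l', rfl⟩ : ∃ a l', l = a :: l' := by
      cases l with
      | nil => exact absurd (hm (Classical.arbitrary V)) (by simp)
      | cons a l' => exact ⟨a, l', rfl⟩
    obtain ⟨b, p, hp⟩ := chain'_to_walk G l' a hc
    exact ⟨a, b, p, fun x => by rw [hp]; exact List.count_eq_one_of_mem hnd (hm x)⟩

end Aux

/-- Let `G = (V, E)` be a graph with `|V| ≥ 3` and let `G'` be any graph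
obtained from `G` by repeatedly adding an edge between two distinct non-adjacent vertices
`u, v` satisfying `deg(u) + deg(v) ≥ |V|` in the current graph (finitely many such
additions, in any order).  Then `G` has a Hamiltonian path iff `G'` has one. -/
theorem stmt8 {V : Type} [Fintype V] [DecidableEq V] (G G' : SimpleGraph V)
    (h3 : 3 ≤ Fintype.card V)
    (hsteps : Relation.ReflTransGen BondyChvatalStep G G') :
    HasHamiltonianPath G ↔ HasHamiltonianPath G' := by
  have : Nonempty V := Fintype.card_pos_iff.mp (by omega)
  induction hsteps with
  | refl => exact Iff.rfl
  | tail _ hstep ih =>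
    rename_i Hb Hc _
    refine ih.trans ?_
    obtain ⟨u, v, hne, hna, hdeg, rfl⟩ := hstep
    rw [hasHamPath_iff, hasHamPath_iff]
    constructor
    · rintro ⟨l, hc, hnd, hm⟩
      exact ⟨l, hc.imp (fun a b hab => (SimpleGraph.sup_adj _ _ a b).mpr (Or.inl hab)), hnd, hm⟩
    · rintro ⟨l, hl⟩
      exact key Hb u v hna hdeg l hl
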